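/- Let F be a finite Frobenius group with kernel N and complement H, acting linearly on a nontrivial vector space V over a field whose characteristic does not divide |N|. Then either N or H has a nonzero fixed vector in V. -/

import Mathlib

open Finset

/-- If a finite Frobenius group `G` with kernel `N` and complement `H` acts
linearly on a nonzero vector space `V` over a field whose characteristic does not
divide `|N|`, then `N` or `H` has a nonzero fixed vector. -/
theorem stmt9 (G : Type*) [Group G] [Finite G] (N H : Subgroup G)
    [N.Normal] (hNH : N ⊓ H = ⊥) (hNHtop : N ⊔ H = ⊤)
    (hfrob : ∀ h ∈ H, h ≠ 1 → ∀ n ∈ N, h * n * h⁻¹ = n → n = 1)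
    (F : Type*) [Field F] (hchar : ¬ (ringChar F ∣ Nat.card N))
    (V : Type*) [AddCommGroup V] [Module F V] [Nontrivial V]
    [DistribMulAction G V] [SMulCommClass G F V] :
    (∃ v : V, v ≠ 0 ∧ ∀ n ∈ N, n • v = v) ∨
      (∃ v : V, v ≠ 0 ∧ ∀ h ∈ H, h • v = v) := by
  classical
  letI : Fintype G := Fintype.ofFinite G
  letI : Fintype ↥N := Fintype.ofFinite _
  letI : Fintype ↥H := Fintype.ofFinite _
  have hcast : (Nat.card N : F) ≠ 0 := fun h => hchar ((ringChar.spec F _).mp h)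
  have hcardN : Nat.card N = Fintype.card N := Nat.card_eq_fintype_card
  -- Case 1 : the averaging operator over N is nonzero somewhere
  by_cases hA : ∃ v : V, ∑ n : N, (n : G) • v ≠ 0
  · left
    obtain ⟨v, hv⟩ := hA
    refine ⟨∑ n : N, (n : G) • v, hv, fun m hm => ?_⟩
    rw [smul_sum]
    calc ∑ n : N, m • (n : G) • v
        = ∑ n : N, (((⟨m, hm⟩ : N) * n : N) : G) • v := by
          simp [mul_smul]
      _ = ∑ n : N, (n : G) • v :=
          Fintype.sum_equiv (Equiv.mulLeft (⟨m, hm⟩ : N)) _ _ (fun n => rfl)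
  push_neg at hA
  -- Case 2 : the averaging operator over H is nonzero somewhere
  by_cases hB : ∃ v : V, ∑ h : H, (h : G) • v ≠ 0
  · right
    obtain ⟨v, hv⟩ := hB
    refine ⟨∑ h : H, (h : G) • v, hv, fun m hm => ?_⟩
    rw [smul_sum]
    calc ∑ h : H, m • (h : G) • v
        = ∑ h : H, (((⟨m, hm⟩ : H) * h : H) : G) • v := by
          simp [mul_smul]
      _ = ∑ h : H, (h : G) • v :=
          Fintype.sum_equiv (Equiv.mulLeft (⟨m, hm⟩ : H)) _ _ (fun h => rfl)
  push_neg at hB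
  -- Both averaging operators vanish identically : derive a contradiction.
  exfalso
  obtain ⟨v, hv⟩ := exists_ne (0 : V)
  -- Step 1 : the full group sum vanishes everywhere
  have hS : ∀ w : V, ∑ g : G, g • w = 0 := by
    intro w
    have key : (Fintype.card N) • (∑ g : G, g • w) = 0 := by
      have h1 : ∀ g : G, ∑ n : N, (g * (n : G)) • w = 0 := by
        intro g
        calc ∑ n : N, (g * (n : G)) • w = g • ∑ n : N, (n : G) • w := by
              rw [smul_sum]; simp [mul_smul]
          _ = 0 := by rw [hA w, smul_zero]
      have h2 : ∀ n : N, ∑ g : G, (g * (n : G)) • w = ∑ g : G, g • w :=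
        fun n => Fintype.sum_equiv (Equiv.mulRight (n : G)) _ _ (fun g => rfl)
      calc (Fintype.card N) • (∑ g : G, g • w)
          = ∑ _n : N, ∑ g : G, g • w := (sum_const _).symm
        _ = ∑ n : N, ∑ g : G, (g * (n : G)) • w := by
            exact Finset.sum_congr rfl (fun n _ => (h2 n).symm)
        _ = ∑ g : G, ∑ n : N, (g * (n : G)) • w := Finset.sum_comm
        _ = 0 := by simp [h1]
    have : ((Fintype.card N : F)) • (∑ g : G, g • w) = 0 := by
      rwa [Nat.cast_smul_eq_nsmul]
    rcases smul_eq_zero.mp this with h | h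
    · exact absurd h (by rw [hcardN] at hcast; exact_mod_cast hcast)
    · exact h
  -- Step 2 : the conjugation map is injective on N × (H \ {1})
  set D : Finset (N × H) := Finset.univ ×ˢ (Finset.univ.erase 1) with hD
  set φ : N × H → G := fun p => (p.1 : G) * (p.2 : G) * (p.1 : G)⁻¹ with hφ
  have hinj : Set.InjOn φ D := by
    rintro ⟨n₁, h₁⟩ hp₁ ⟨n₂, h₂⟩ hp₂ heq
    have hq₁ : h₁ ≠ 1 := by
      have := Finset.mem_coe.mp hp₁
      simp only [hD, Finset.mem_product, Finset.mem_erase, Finset.mem_univ,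
        and_true, true_and] at this
      exact this
    set n : G := (n₂ : G)⁻¹ * (n₁ : G) with hn
    have hnN : n ∈ N := N.mul_mem (N.inv_mem n₂.2) n₁.2
    simp only [hφ] at heq
    have hkey : n * (h₁ : G) * n⁻¹ = (h₂ : G) := by
      rw [hn, mul_inv_rev, inv_inv]
      calc (n₂ : G)⁻¹ * (n₁ : G) * (h₁ : G) * ((n₁ : G)⁻¹ * (n₂ : G))
          = (n₂ : G)⁻¹ * ((n₁ : G) * (h₁ : G) * (n₁ : G)⁻¹) * (n₂ : G) := by
            group
        _ = (n₂ : G)⁻¹ * ((n₂ : G) * (h₂ : G) * (n₂ : G)⁻¹) * (n₂ : G) := by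
            rw [heq]
        _ = (h₂ : G) := by group
    have hh12 : (h₂ : G) * (h₁ : G)⁻¹ ∈ N := by
      have hmem : (h₁ : G) * n⁻¹ * (h₁ : G)⁻¹ ∈ N := by
        have := ‹N.Normal›.conj_mem _ (N.inv_mem hnN) (h₁ : G)
        simpa using this
      have heq2 : (h₂ : G) * (h₁ : G)⁻¹ = n * ((h₁ : G) * n⁻¹ * (h₁ : G)⁻¹) := by
        rw [← hkey]; group
      rw [heq2]
      exact N.mul_mem hnN hmem
    have hh12H : (h₂ : G) * (h₁ : G)⁻¹ ∈ H := H.mul_mem h₂.2 (H.inv_mem h₁.2)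
    have hh : (h₂ : G) = (h₁ : G) := by
      have hb : (h₂ : G) * (h₁ : G)⁻¹ ∈ N ⊓ H := ⟨hh12, hh12H⟩
      rw [hNH, Subgroup.mem_bot] at hb
      exact mul_inv_eq_one.mp hb
    have h4 : n * (h₁ : G) * n⁻¹ = (h₁ : G) := hkey.trans hh
    have hc : n * (h₁ : G) = (h₁ : G) * n := by
      calc n * (h₁ : G) = (n * (h₁ : G) * n⁻¹) * n := by group
        _ = (h₁ : G) * n := by rw [h4]
    have hn1 : n = 1 := by
      refine hfrob (h₁ : G) h₁.2 ?_ n hnN ?_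
      · intro hc1
        exact hq₁ (Subtype.ext (by simpa using hc1))
      · rw [← hc]
        simp [mul_assoc]
    have hn12 : (n₁ : G) = (n₂ : G) := by
      have h5 : (n₂ : G)⁻¹ * (n₁ : G) = 1 := by rw [← hn, hn1]
      calc (n₁ : G) = (n₂ : G) * ((n₂ : G)⁻¹ * (n₁ : G)) := by group
        _ = (n₂ : G) := by rw [h5, mul_one]
    exact Prod.ext (Subtype.ext hn12) (Subtype.ext hh.symm)
  -- Step 3 : the image of φ on D is exactly the complement of N
  have himsub : D.image φ ⊆ Finset.univ.filter (fun g : G => g ∉ N) := by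
    intro g hg
    obtain ⟨⟨n, h⟩, hp, rfl⟩ := Finset.mem_image.mp hg
    simp only [hD, Finset.mem_product, Finset.mem_erase, Finset.mem_univ,
      and_true, true_and] at hp
    simp only [Finset.mem_filter, Finset.mem_univ, true_and]
    intro hc
    have hc' : (n : G) * (h : G) * (n : G)⁻¹ ∈ N := hc
    have h2 : (n : G)⁻¹ * ((n : G) * (h : G) * (n : G)⁻¹) * ((n : G)⁻¹)⁻¹ ∈ N :=
      ‹N.Normal›.conj_mem _ hc' _
    rw [show (n : G)⁻¹ * ((n : G) * (h : G) * (n : G)⁻¹) * ((n : G)⁻¹)⁻¹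
        = (h : G) by group] at h2
    have hb : (h : G) ∈ N ⊓ H := ⟨h2, h.2⟩
    rw [hNH, Subgroup.mem_bot] at hb
    exact hp (Subtype.ext (by simpa using hb))
  have hcardG : Fintype.card N * Fintype.card H = Fintype.card G := by
    have hcompl : Subgroup.IsComplement' N H := by
      apply Subgroup.isComplement'_of_disjoint_and_mul_eq_univ
      · exact disjoint_iff.mpr hNH
      · rw [← Subgroup.normal_mul, hNHtop, Subgroup.coe_top]
    have := hcompl.card_mul
    simpa [Nat.card_eq_fintype_card] using this
  have hHpos : 0 < Fintype.card H := Fintype.card_pos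
  have hcards : (D.image φ).card
      = (Finset.univ.filter (fun g : G => g ∉ N)).card := by
    have h1 : (D.image φ).card = D.card := Finset.card_image_of_injOn hinj
    have h2 : D.card = Fintype.card N * (Fintype.card H - 1) := by
      simp [hD, Finset.card_erase_of_mem, Finset.card_univ]
    have h3 : (Finset.univ.filter (fun g : G => g ∉ N)).card
        = Fintype.card G - Fintype.card N := by
      rw [Finset.filter_not, Finset.card_sdiff_of_subset (Finset.filter_subset _ _)]
      congr 1
      have h4 := Fintype.card_subtype (fun x : G => x ∈ N)
      convert h4.symm using 2
    rw [h1, h2, h3, ← hcardG]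
    rcases Nat.exists_eq_add_of_lt hHpos with ⟨k, hk⟩
    rw [hk]
    simp only [Nat.zero_add, Nat.add_sub_cancel, Nat.mul_add, Nat.mul_one]
  have himeq : D.image φ = Finset.univ.filter (fun g : G => g ∉ N) :=
    Finset.eq_of_subset_of_card_le himsub (le_of_eq hcards.symm)
  -- Step 4 : compute the sum over the partition in two ways
  have hsum1 : ∑ g ∈ D.image φ, g • v = 0 := by
    have hfull : ∑ g ∈ Finset.univ.filter (fun g : G => g ∈ N), g • v = 0 := by
      have hst := Finset.sum_subtype (F := ‹Fintype ↥N›)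
        (s := Finset.univ.filter (fun g : G => g ∈ N))
        (p := fun g : G => g ∈ N) (fun x => by simp) (fun g : G => g • v)
      rw [hst]
      exact hA v
    have hsplit := Finset.sum_filter_add_sum_filter_not Finset.univ
      (fun g : G => g ∈ N) (fun g : G => g • v)
    rw [himeq]
    rw [hS v, hfull, zero_add] at hsplit
    exact hsplit
  have hsum2 : ∑ g ∈ D.image φ, g • v = -((Fintype.card N : F) • v) := by
    rw [Finset.sum_image (fun p hp q hq h => hinj (Finset.mem_coe.mpr hp) (Finset.mem_coe.mpr hq) h)]
    have hinner : ∀ n : N, ∑ h ∈ (Finset.univ : Finset H).erase 1,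
        φ (n, h) • v = -v := by
      intro n
      have htot : ∑ h : H, φ (n, h) • v = 0 := by
        calc ∑ h : H, φ (n, h) • v
            = (n : G) • ∑ h : H, (h : G) • ((n : G)⁻¹ • v) := by
              rw [smul_sum]
              exact Finset.sum_congr rfl (fun h _ => by simp [hφ, mul_smul])
          _ = 0 := by rw [hB, smul_zero]
      have := Finset.add_sum_erase Finset.univ (fun h : H => φ (n, h) • v)
        (Finset.mem_univ (1 : H))
      have h1 : φ (n, (1 : H)) • v = v := by simp [hφ]
      simp only [htot, h1] at this
      exact eq_neg_of_add_eq_zero_right this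
    calc ∑ p ∈ D, φ p • v
        = ∑ n : N, ∑ h ∈ (Finset.univ : Finset H).erase 1, φ (n, h) • v :=
          Finset.sum_product _ _ _
      _ = ∑ _n : N, -v := Finset.sum_congr rfl (fun n _ => hinner n)
      _ = -((Fintype.card N : F) • v) := by
          rw [sum_const, card_univ, Nat.cast_smul_eq_nsmul, smul_neg]
  rw [hsum1] at hsum2
  have : (Fintype.card N : F) • v = 0 := by
    rw [← neg_eq_zero]
    exact hsum2.symm
  rcases smul_eq_zero.mp this with h | h
  · rw [hcardN] at hcast
    exact hcast (by exact_mod_cast h)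
  · exact hv h
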